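/- For any integers N ≥ d+1 ≥ 2, let Z be an N×d real matrix, let Z̄ = (I_N − (1/N)·1_{N,N}) Z, and let T be the unique positive semidefinite symmetric square root of (1/N) Z̄ᵀ Z̄. Then the map Z ↦ T is Lipschitz with constant √2/√N with respect to the Frobenius norm. -/

import Mathlib

open Matrix Real

/-- The absolute value |A| = (AᵀA)^{1/2} of a real rectangular matrix: the unique
positive semidefinite symmetric square root of AᵀA. -/
noncomputable def matAbs {m n : ℕ} (A : Matrix (Fin m) (Fin n) ℝ) : Matrix (Fin n) (Fin n) ℝ :=
  ((Matrix.posSemidef_conjTranspose_mul_self A).1.eigenvectorUnitary : Matrix (Fin n) (Fin n) ℝ) *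
    diagonal ((RCLike.ofReal : ℝ → ℝ) ∘ Real.sqrt ∘
      (Matrix.posSemidef_conjTranspose_mul_self A).1.eigenvalues) *
    star ((Matrix.posSemidef_conjTranspose_mul_self A).1.eigenvectorUnitary : Matrix (Fin n) (Fin n) ℝ)

/-- The Frobenius norm of a real matrix. -/
noncomputable def frob {m n : ℕ} (A : Matrix (Fin m) (Fin n) ℝ) : ℝ :=
  Real.sqrt (∑ i, ∑ j, (A i j) ^ 2)

/-- The centering projection Z ↦ Z̄ = (I - (1/N)·𝟙)Z. -/
noncomputable def centered {N d : ℕ} (Z : Matrix (Fin N) (Fin d) ℝ) : Matrix (Fin N) (Fin d) ℝ :=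
  (1 - (N : ℝ)⁻¹ • Matrix.of fun _ _ => (1 : ℝ)) * Z

/-- T(Z): the unique positive semidefinite symmetric square root of (1/N)·Z̄ᵀZ̄,
realized as |N^{-1/2} • Z̄|. -/
noncomputable def covSqrt {N d : ℕ} (Z : Matrix (Fin N) (Fin d) ℝ) : Matrix (Fin d) (Fin d) ℝ :=
  matAbs ((Real.sqrt N)⁻¹ • centered Z)


namespace Matrix.PosSemidef
variable {n : Type*} [Fintype n] [DecidableEq n]

/-- the positive semidefinite square root, via the spectral theorem -/
noncomputable def sqrt {A : Matrix n n ℝ} (hA : A.PosSemidef) : Matrix n n ℝ :=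
  (hA.1.eigenvectorUnitary : Matrix n n ℝ) *
    diagonal ((RCLike.ofReal : ℝ → ℝ) ∘ Real.sqrt ∘ hA.1.eigenvalues) *
    star (hA.1.eigenvectorUnitary : Matrix n n ℝ)

open scoped MatrixOrder in
lemma sqrt_eq_cfc {A : Matrix n n ℝ} (hA : A.PosSemidef) : hA.sqrt = CFC.sqrt A := by
  have h0 : 0 ≤ A := Matrix.nonneg_iff_posSemidef.mpr hA
  rw [CFC.sqrt_eq_real_sqrt A h0, cfcₙ_eq_cfc, hA.1.cfc_eq, IsHermitian.cfc,
    Unitary.conjStarAlgAut_apply]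
  rfl

open scoped MatrixOrder in
lemma posSemidef_sqrt {A : Matrix n n ℝ} (hA : A.PosSemidef) : hA.sqrt.PosSemidef := by
  rw [sqrt_eq_cfc]
  exact Matrix.nonneg_iff_posSemidef.mp (CFC.sqrt_nonneg A)

open scoped MatrixOrder in
lemma sqrt_mul_self {A : Matrix n n ℝ} (hA : A.PosSemidef) : hA.sqrt * hA.sqrt = A := by
  rw [sqrt_eq_cfc]
  exact CFC.sqrt_mul_sqrt_self A (Matrix.nonneg_iff_posSemidef.mpr hA)

open scoped MatrixOrder in
lemma eq_sqrt_of_sq_eq {A : Matrix n n ℝ} (hA : A.PosSemidef) (B : Matrix n n ℝ)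
    (hB : B.PosSemidef) (hB2 : B ^ 2 = A) : B = hA.sqrt := by
  rw [sqrt_eq_cfc]
  exact (CFC.sqrt_unique (by rw [← pow_two]; exact hB2) (Matrix.nonneg_iff_posSemidef.mpr hB)).symm

end Matrix.PosSemidef

lemma Matrix.posSemidef_iff_eq_transpose_mul_self {n : Type*} [Fintype n] [DecidableEq n]
    {A : Matrix n n ℝ} : A.PosSemidef ↔ ∃ B : Matrix n n ℝ, A = Bᴴ * B := by
  constructor
  · intro hA
    exact ⟨hA.sqrt, by rw [hA.posSemidef_sqrt.1.eq, hA.sqrt_mul_self]⟩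
  · rintro ⟨B, rfl⟩
    exact Matrix.posSemidef_conjTranspose_mul_self B


section Aux
variable {m n : Type*} [Fintype m] [Fintype n]

lemma trace_conjTranspose_mul_self_nonneg (A : Matrix m n ℝ) :
    0 ≤ Matrix.trace (Aᴴ * A) := by
  rw [Matrix.trace]
  refine Finset.sum_nonneg fun j _ => ?_
  rw [Matrix.diag_apply, Matrix.mul_apply]
  refine Finset.sum_nonneg fun i _ => ?_
  simp [Matrix.conjTranspose_apply, mul_self_nonneg]

lemma trace_mul_nonneg_of_posSemidef [DecidableEq n] {P Q : Matrix n n ℝ}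
    (hP : P.PosSemidef) (hQ : Q.PosSemidef) : 0 ≤ Matrix.trace (P * Q) := by
  obtain ⟨B, rfl⟩ := Matrix.posSemidef_iff_eq_transpose_mul_self.mp hP
  obtain ⟨C, rfl⟩ := Matrix.posSemidef_iff_eq_transpose_mul_self.mp hQ
  have h1 : Bᴴ * B * (Cᴴ * C) = Bᴴ * (B * Cᴴ * C) := by simp only [Matrix.mul_assoc]
  rw [h1, Matrix.trace_mul_comm]
  have h2 : B * Cᴴ * C * Bᴴ = (C * Bᴴ)ᴴ * (C * Bᴴ) := by
    rw [Matrix.conjTranspose_mul, Matrix.conjTranspose_conjTranspose]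
    simp only [Matrix.mul_assoc]
  rw [h2]
  exact trace_conjTranspose_mul_self_nonneg _
end Aux

section CFC
variable {n : Type*} [Fintype n] [DecidableEq n]
variable {S : Matrix n n ℝ} (hS : S.IsHermitian)

/-- poor man's continuous functional calculus for real symmetric matrices -/
noncomputable def herm_cfc (f : ℝ → ℝ) : Matrix n n ℝ :=
  (hS.eigenvectorUnitary : Matrix n n ℝ) * Matrix.diagonal (fun i => f (hS.eigenvalues i)) *
    (star (hS.eigenvectorUnitary : Matrix n n ℝ))

lemma herm_cfc_mul (f g : ℝ → ℝ) :
    herm_cfc hS f * herm_cfc hS g = herm_cfc hS (fun x => f x * g x) := by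
  unfold herm_cfc
  set U : Matrix n n ℝ := (hS.eigenvectorUnitary : Matrix n n ℝ) with hU
  set D : Matrix n n ℝ := Matrix.diagonal (fun i => f (hS.eigenvalues i)) with hD
  set E : Matrix n n ℝ := Matrix.diagonal (fun i => g (hS.eigenvalues i)) with hE
  have h1 : star U * U = 1 := Unitary.coe_star_mul_self hS.eigenvectorUnitary
  calc U * D * star U * (U * E * star U)
      = U * (D * ((star U * U) * (E * star U))) := by simp only [Matrix.mul_assoc]
    _ = U * (D * E) * star U := by rw [h1, Matrix.one_mul]; simp only [Matrix.mul_assoc]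
    _ = U * Matrix.diagonal (fun i => (fun x => f x * g x) (hS.eigenvalues i)) * star U := by
        rw [hD, hE, Matrix.diagonal_mul_diagonal]

lemma herm_cfc_id : herm_cfc hS (fun x => x) = S := by
  conv_rhs => rw [hS.spectral_theorem]
  rfl

lemma herm_cfc_sub (f g : ℝ → ℝ) :
    herm_cfc hS f - herm_cfc hS g = herm_cfc hS (fun x => f x - g x) := by
  unfold herm_cfc
  rw [← Matrix.sub_mul, ← Matrix.mul_sub, Matrix.diagonal_sub]

lemma herm_cfc_add (f g : ℝ → ℝ) :
    herm_cfc hS f + herm_cfc hS g = herm_cfc hS (fun x => f x + g x) := by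
  unfold herm_cfc
  rw [← Matrix.add_mul, ← Matrix.mul_add, Matrix.diagonal_add]

lemma herm_cfc_posSemidef (f : ℝ → ℝ) (hf : ∀ x, 0 ≤ f x) :
    (herm_cfc hS f).PosSemidef := by
  unfold herm_cfc
  rw [Matrix.star_eq_conjTranspose]
  exact (Matrix.PosSemidef.diagonal (fun i => hf _)).mul_mul_conjTranspose_same _

lemma herm_cfc_zero : herm_cfc hS (fun _ => (0:ℝ)) = 0 := by
  unfold herm_cfc
  simp

/-- positive part -/
noncomputable def hermPos : Matrix n n ℝ := herm_cfc hS (fun x => max x 0)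
/-- negative part -/
noncomputable def hermNeg : Matrix n n ℝ := herm_cfc hS (fun x => max (-x) 0)

lemma hermPos_posSemidef : (hermPos hS).PosSemidef :=
  herm_cfc_posSemidef hS _ (fun x => le_max_right _ _)

lemma hermNeg_posSemidef : (hermNeg hS).PosSemidef :=
  herm_cfc_posSemidef hS _ (fun x => le_max_right _ _)

lemma hermPos_sub_hermNeg : hermPos hS - hermNeg hS = S := by
  rw [hermPos, hermNeg, herm_cfc_sub]
  have : (fun x => max x 0 - max (-x) 0) = fun x : ℝ => x := by
    funext x; rcases le_total x 0 with h | h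
    · rw [max_eq_right h, max_eq_left (neg_nonneg.mpr h)]; ring
    · rw [max_eq_left h, max_eq_right (neg_nonpos.mpr h)]; ring
  rw [this, herm_cfc_id]

lemma trace_hermPos_mul_hermNeg : Matrix.trace (hermPos hS * hermNeg hS) = 0 := by
  rw [hermPos, hermNeg, herm_cfc_mul]
  have : (fun x : ℝ => max x 0 * max (-x) 0) = fun _ => (0:ℝ) := by
    funext x; rcases le_total x 0 with h | h
    · simp [max_eq_right h]
    · simp [max_eq_right (neg_nonpos.mpr h)]
  rw [this, herm_cfc_zero, Matrix.trace_zero]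

lemma sqrt_conjTranspose_mul_self_of_hermitian :
    (Matrix.posSemidef_conjTranspose_mul_self S).sqrt = hermPos hS + hermNeg hS := by
  symm
  apply Matrix.PosSemidef.eq_sqrt_of_sq_eq
  · exact ((hermPos_posSemidef hS).add (hermNeg_posSemidef hS))
  · rw [pow_two, hermPos, hermNeg, herm_cfc_add, herm_cfc_mul]
    have h1 : (fun x : ℝ => (max x 0 + max (-x) 0) * (max x 0 + max (-x) 0)) =
        fun x : ℝ => x * x := by
      funext x; rcases le_total x 0 with h | h
      · simp [max_eq_right h, max_eq_left (neg_nonneg.mpr h)]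
      · simp [max_eq_left h, max_eq_right (neg_nonpos.mpr h)]
    rw [h1, ← herm_cfc_mul, herm_cfc_id, hS.eq]
end CFC

section Herm
variable {n : Type*} [Fintype n] [DecidableEq n]

/-- the Hermitian case of the Araki–Yamagami inequality, with constant 1 -/
lemma herm_AY {S T : Matrix n n ℝ} (hS : S.IsHermitian) (hT : T.IsHermitian) :
    Matrix.trace (((Matrix.posSemidef_conjTranspose_mul_self S).sqrt -
        (Matrix.posSemidef_conjTranspose_mul_self T).sqrt)ᴴ *
      ((Matrix.posSemidef_conjTranspose_mul_self S).sqrt -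
        (Matrix.posSemidef_conjTranspose_mul_self T).sqrt)) ≤
    Matrix.trace ((S - T)ᴴ * (S - T)) := by
  rw [sqrt_conjTranspose_mul_self_of_hermitian hS, sqrt_conjTranspose_mul_self_of_hermitian hT]
  set U : Matrix n n ℝ := hermPos hS - hermPos hT with hUdef
  set V : Matrix n n ℝ := hermNeg hS - hermNeg hT with hVdef
  have hP : hermPos hS + hermNeg hS - (hermPos hT + hermNeg hT) = U + V := by
    rw [hUdef, hVdef]; abel
  have hD : S - T = U - V := by
    calc S - T = (hermPos hS - hermNeg hS) - (hermPos hT - hermNeg hT) := by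
          rw [hermPos_sub_hermNeg, hermPos_sub_hermNeg]
      _ = U - V := by rw [hUdef, hVdef]; abel
  rw [hP, hD]
  have hUh : U.IsHermitian := (hermPos_posSemidef hS).1.sub (hermPos_posSemidef hT).1
  have hVh : V.IsHermitian := (hermNeg_posSemidef hS).1.sub (hermNeg_posSemidef hT).1
  have e1 : (U + V)ᴴ * (U + V) = U * U + V * V + (U * V + V * U) := by
    rw [Matrix.conjTranspose_add, hUh.eq, hVh.eq]; noncomm_ring
  have e2 : (U - V)ᴴ * (U - V) = U * U + V * V - (U * V + V * U) := by
    rw [Matrix.conjTranspose_sub, hUh.eq, hVh.eq]; noncomm_ring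
  rw [e1, e2, Matrix.trace_add, Matrix.trace_sub]
  have key : Matrix.trace (U * V + V * U) ≤ 0 := by
    have h2 : Matrix.trace (U * V + V * U) = 2 * Matrix.trace (U * V) := by
      rw [Matrix.trace_add, Matrix.trace_mul_comm V U]; ring
    rw [h2]
    have expand : U * V = hermPos hS * hermNeg hS - hermPos hS * hermNeg hT
        - hermPos hT * hermNeg hS + hermPos hT * hermNeg hT := by
      rw [hUdef, hVdef]; noncomm_ring
    have : Matrix.trace (U * V) ≤ 0 := by
      rw [expand, Matrix.trace_add, Matrix.trace_sub, Matrix.trace_sub,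
        trace_hermPos_mul_hermNeg hS, trace_hermPos_mul_hermNeg hT]
      have a1 := trace_mul_nonneg_of_posSemidef (hermPos_posSemidef hS) (hermNeg_posSemidef hT)
      have a2 := trace_mul_nonneg_of_posSemidef (hermPos_posSemidef hT) (hermNeg_posSemidef hS)
      linarith
    linarith
  linarith
end Herm

section Dilation
variable {m n : Type*} [Fintype m] [Fintype n] [DecidableEq m] [DecidableEq n]

lemma posSemidef_fromBlocks_diag {P : Matrix n n ℝ} {Q : Matrix m m ℝ}
    (hP : P.PosSemidef) (hQ : Q.PosSemidef) :
    (Matrix.fromBlocks P 0 0 Q).PosSemidef := by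
  obtain ⟨B, rfl⟩ := Matrix.posSemidef_iff_eq_transpose_mul_self.mp hP
  obtain ⟨C, rfl⟩ := Matrix.posSemidef_iff_eq_transpose_mul_self.mp hQ
  have : Matrix.fromBlocks (Bᴴ * B) 0 0 (Cᴴ * C) =
      (Matrix.fromBlocks B 0 0 C)ᴴ * (Matrix.fromBlocks B 0 0 C) := by
    rw [Matrix.fromBlocks_conjTranspose, Matrix.fromBlocks_multiply]
    simp
  rw [this]
  exact Matrix.posSemidef_conjTranspose_mul_self _

lemma trace_fromBlocks_diag (P : Matrix n n ℝ) (B : Matrix n m ℝ) (C : Matrix m n ℝ)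
    (Q : Matrix m m ℝ) :
    Matrix.trace (Matrix.fromBlocks P B C Q) = Matrix.trace P + Matrix.trace Q := by
  simp [Matrix.trace, Fintype.sum_sum_type]

lemma fromBlocks_sub (A A' : Matrix n n ℝ) (B B' : Matrix n m ℝ) (C C' : Matrix m n ℝ)
    (D D' : Matrix m m ℝ) :
    Matrix.fromBlocks A B C D - Matrix.fromBlocks A' B' C' D' =
      Matrix.fromBlocks (A - A') (B - B') (C - C') (D - D') := by
  ext i j
  rcases i with i | i <;> rcases j with j | j <;> simp [Matrix.fromBlocks]

/-- General Araki–Yamagami inequality (squared form). -/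
lemma general_AY (A B : Matrix m n ℝ) :
    Matrix.trace (((Matrix.posSemidef_conjTranspose_mul_self A).sqrt -
        (Matrix.posSemidef_conjTranspose_mul_self B).sqrt)ᴴ *
      ((Matrix.posSemidef_conjTranspose_mul_self A).sqrt -
        (Matrix.posSemidef_conjTranspose_mul_self B).sqrt)) ≤
    2 * Matrix.trace ((A - B)ᴴ * (A - B)) := by
  set At : Matrix (n ⊕ m) (n ⊕ m) ℝ := Matrix.fromBlocks 0 Aᴴ A 0 with hAt
  set Bt : Matrix (n ⊕ m) (n ⊕ m) ℝ := Matrix.fromBlocks 0 Bᴴ B 0 with hBt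
  have hAh : At.IsHermitian := by
    rw [Matrix.IsHermitian, hAt, Matrix.fromBlocks_conjTranspose]
    simp
  have hBh : Bt.IsHermitian := by
    rw [Matrix.IsHermitian, hBt, Matrix.fromBlocks_conjTranspose]
    simp
  -- sqrt of the dilation is the block diagonal of the sqrts
  have hsq : ∀ (C : Matrix m n ℝ),
      (Matrix.posSemidef_conjTranspose_mul_self (Matrix.fromBlocks 0 Cᴴ C 0)).sqrt =
        Matrix.fromBlocks (Matrix.posSemidef_conjTranspose_mul_self C).sqrt 0 0
          (Matrix.posSemidef_conjTranspose_mul_self Cᴴ).sqrt := by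
    intro C
    symm
    apply Matrix.PosSemidef.eq_sqrt_of_sq_eq
    · exact posSemidef_fromBlocks_diag
        (Matrix.posSemidef_conjTranspose_mul_self C).posSemidef_sqrt
        (Matrix.posSemidef_conjTranspose_mul_self Cᴴ).posSemidef_sqrt
    · rw [pow_two, Matrix.fromBlocks_multiply]
      have hCh : (Matrix.fromBlocks 0 Cᴴ C 0 : Matrix (n ⊕ m) (n ⊕ m) ℝ)ᴴ =
          Matrix.fromBlocks 0 Cᴴ C 0 := by
        rw [Matrix.fromBlocks_conjTranspose]; simp
      rw [hCh, Matrix.fromBlocks_multiply]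
      have e1 := (Matrix.posSemidef_conjTranspose_mul_self C).sqrt_mul_self
      have e2 := (Matrix.posSemidef_conjTranspose_mul_self Cᴴ).sqrt_mul_self
      rw [e1, e2]
      simp [Matrix.conjTranspose_conjTranspose]
  have hmain := herm_AY hAh hBh
  rw [hsq A, hsq B, fromBlocks_sub] at hmain
  rw [Matrix.fromBlocks_conjTranspose, Matrix.fromBlocks_multiply] at hmain
  -- also expand RHS of hmain
  have hABsub : At - Bt = Matrix.fromBlocks 0 (Aᴴ - Bᴴ) (A - B) 0 := by
    rw [hAt, hBt, fromBlocks_sub]; simp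
  rw [hABsub, Matrix.fromBlocks_conjTranspose, Matrix.fromBlocks_multiply] at hmain
  rw [trace_fromBlocks_diag, trace_fromBlocks_diag] at hmain
  have pos2 : 0 ≤ Matrix.trace
      (((Matrix.posSemidef_conjTranspose_mul_self Aᴴ).sqrt -
        (Matrix.posSemidef_conjTranspose_mul_self Bᴴ).sqrt)ᴴ *
       ((Matrix.posSemidef_conjTranspose_mul_self Aᴴ).sqrt -
        (Matrix.posSemidef_conjTranspose_mul_self Bᴴ).sqrt)) :=
    trace_conjTranspose_mul_self_nonneg _
  have flip : Matrix.trace ((A - B) * (Aᴴ - Bᴴ)) = Matrix.trace ((Aᴴ - Bᴴ) * (A - B)) :=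
    Matrix.trace_mul_comm _ _
  simp only [Matrix.conjTranspose_zero, Matrix.conjTranspose_sub,
    Matrix.conjTranspose_conjTranspose, sub_self, Matrix.zero_mul, Matrix.mul_zero,
    add_zero, zero_add] at hmain pos2 ⊢
  linarith [hmain, pos2, flip]
end Dilation

section Final

lemma frob_eq_sqrt_trace {m n : ℕ} (A : Matrix (Fin m) (Fin n) ℝ) :
    frob A = Real.sqrt (Matrix.trace (Aᴴ * A)) := by
  unfold frob
  congr 1
  rw [Matrix.trace, Finset.sum_comm]
  refine Finset.sum_congr rfl fun j _ => ?_
  rw [Matrix.diag_apply, Matrix.mul_apply]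
  refine Finset.sum_congr rfl fun i _ => ?_
  simp [Matrix.conjTranspose_apply, pow_two]

lemma trace_smul_sq {m n : ℕ} (c : ℝ) (A : Matrix (Fin m) (Fin n) ℝ) :
    Matrix.trace ((c • A)ᴴ * (c • A)) = c ^ 2 * Matrix.trace (Aᴴ * A) := by
  rw [Matrix.conjTranspose_smul, Matrix.smul_mul, Matrix.mul_smul, Matrix.trace_smul,
    Matrix.trace_smul]
  simp [pow_two, smul_smul, star_trivial, mul_assoc]

lemma trace_centering_le {N d : ℕ} (hN : 0 < N) (Y : Matrix (Fin N) (Fin d) ℝ) :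
    Matrix.trace ((((1 : Matrix (Fin N) (Fin N) ℝ) -
        (N : ℝ)⁻¹ • Matrix.of fun _ _ => (1 : ℝ)) * Y)ᴴ *
      ((((1 : Matrix (Fin N) (Fin N) ℝ) - (N : ℝ)⁻¹ • Matrix.of fun _ _ => (1 : ℝ))) * Y)) ≤
    Matrix.trace (Yᴴ * Y) := by
  set J : Matrix (Fin N) (Fin N) ℝ := Matrix.of fun _ _ => (1 : ℝ) with hJ
  set M : Matrix (Fin N) (Fin N) ℝ := 1 - (N : ℝ)⁻¹ • J with hM
  have hNne : (N : ℝ) ≠ 0 := Nat.cast_ne_zero.mpr hN.ne'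
  have hJJ : J * J = (N : ℝ) • J := by
    ext i j
    simp [hJ, Matrix.mul_apply, Matrix.smul_apply]
  have hJh : Jᴴ = J := by
    ext i j
    simp [hJ, Matrix.conjTranspose_apply]
  have hMh : Mᴴ = M := by
    rw [hM, Matrix.conjTranspose_sub, Matrix.conjTranspose_one, Matrix.conjTranspose_smul,
      star_trivial, hJh]
  have hMM : M * M = M := by
    have hc : (N:ℝ)⁻¹ * (N:ℝ)⁻¹ * (N:ℝ) = (N:ℝ)⁻¹ := by field_simp
    have h1 : M * M = 1 - (N:ℝ)⁻¹ • J -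
        ((N:ℝ)⁻¹ • J - ((N:ℝ)⁻¹ * (N:ℝ)⁻¹) • (J * J)) := by
      rw [hM, Matrix.sub_mul, Matrix.one_mul, Matrix.mul_sub, Matrix.mul_one,
        Matrix.smul_mul, Matrix.mul_smul, smul_smul]
    rw [h1, hJJ, smul_smul, hc, hM]
    abel
  have key : (M * Y)ᴴ * (M * Y) = Yᴴ * M * Y := by
    rw [Matrix.conjTranspose_mul, hMh, Matrix.mul_assoc, ← Matrix.mul_assoc M M Y, hMM,
      ← Matrix.mul_assoc]
  rw [key]
  have hJpsd : J.PosSemidef := by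
    have : J = (Matrix.of fun (_ : Fin 1) (_ : Fin N) => (1:ℝ))ᴴ *
        (Matrix.of fun (_ : Fin 1) (_ : Fin N) => (1:ℝ)) := by
      ext i j
      simp [hJ, Matrix.mul_apply, Matrix.conjTranspose_apply]
    rw [this]
    exact Matrix.posSemidef_conjTranspose_mul_self _
  have hdiff : Yᴴ * Y - Yᴴ * M * Y = (N : ℝ)⁻¹ • (Yᴴ * J * Y) := by
    rw [hM, Matrix.mul_sub, Matrix.mul_one, Matrix.sub_mul, Matrix.mul_smul, Matrix.smul_mul]
    abel
  have hpsd2 : (Yᴴ * J * Y).PosSemidef := hJpsd.conjTranspose_mul_mul_same Y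
  have htr : 0 ≤ Matrix.trace (Yᴴ * J * Y) := by
    obtain ⟨B, hB⟩ := Matrix.posSemidef_iff_eq_transpose_mul_self.mp hpsd2
    rw [hB]
    exact trace_conjTranspose_mul_self_nonneg _
  have : Matrix.trace (Yᴴ * Y) - Matrix.trace (Yᴴ * M * Y) =
      (N : ℝ)⁻¹ * Matrix.trace (Yᴴ * J * Y) := by
    rw [← Matrix.trace_sub, hdiff, Matrix.trace_smul]
    simp
  have h2 : 0 ≤ (N : ℝ)⁻¹ * Matrix.trace (Yᴴ * J * Y) :=
    mul_nonneg (by positivity) htr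
  linarith

end Final


theorem stmt15 (N d : ℕ) (hd : 1 ≤ d) (hN : d + 1 ≤ N)
    (Z Z' : Matrix (Fin N) (Fin d) ℝ) :
    frob (covSqrt Z - covSqrt Z') ≤ (Real.sqrt 2 / Real.sqrt N) * frob (Z - Z') := by
  have hN0 : 0 < N := lt_of_lt_of_le (Nat.succ_le_succ (Nat.zero_le d)) hN
  have hNpos : (0:ℝ) < (N:ℝ) := Nat.cast_pos.mpr hN0
  set A := (Real.sqrt N)⁻¹ • centered Z with hA
  set B := (Real.sqrt N)⁻¹ • centered Z' with hB
  have h1 : frob (covSqrt Z - covSqrt Z') ≤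
      Real.sqrt (2 * Matrix.trace ((A - B)ᴴ * (A - B))) := by
    rw [covSqrt, covSqrt, matAbs, matAbs, frob_eq_sqrt_trace]
    exact Real.sqrt_le_sqrt (general_AY A B)
  have hAB : A - B = (Real.sqrt N)⁻¹ •
      (((1 : Matrix (Fin N) (Fin N) ℝ) - (N : ℝ)⁻¹ • Matrix.of fun _ _ => (1 : ℝ)) * (Z - Z')) := by
    rw [hA, hB, ← smul_sub, centered, centered]
    exact congrArg _ (Matrix.mul_sub _ _ _).symm
  have h2 : Matrix.trace ((A - B)ᴴ * (A - B)) ≤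
      (N : ℝ)⁻¹ * Matrix.trace ((Z - Z')ᴴ * (Z - Z')) := by
    rw [hAB, trace_smul_sq]
    have hc : ((Real.sqrt N)⁻¹) ^ 2 = (N : ℝ)⁻¹ := by
      rw [← Real.sqrt_inv, Real.sq_sqrt (by positivity)]
    rw [hc]
    exact mul_le_mul_of_nonneg_left (trace_centering_le hN0 (Z - Z')) (by positivity)
  have h3 : Real.sqrt (2 * Matrix.trace ((A - B)ᴴ * (A - B))) ≤
      Real.sqrt (2 * ((N : ℝ)⁻¹ * Matrix.trace ((Z - Z')ᴴ * (Z - Z')))) :=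
    Real.sqrt_le_sqrt (by linarith)
  have h4 : Real.sqrt (2 * ((N : ℝ)⁻¹ * Matrix.trace ((Z - Z')ᴴ * (Z - Z')))) =
      (Real.sqrt 2 / Real.sqrt N) * frob (Z - Z') := by
    rw [frob_eq_sqrt_trace, Real.sqrt_mul (by norm_num), Real.sqrt_mul (by positivity),
      Real.sqrt_inv, div_eq_mul_inv]
    ring
  calc frob (covSqrt Z - covSqrt Z') ≤ _ := h1
    _ ≤ _ := h3
    _ = _ := h4
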